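/- arXiv:2302.06239 — 4 statements merged into one kernel-verified Lean document; each statement's English description precedes it below -/
import Mathlib

section
/- If A is an invertible real matrix whose symmetric part (A + Aᵀ)/2 is positive semidefinite, and C is any real matrix of compatible dimensions, then the Schur complement Cᵀ A⁻¹ C also has positive semidefinite symmetric part. -/
open Matrix

theorem schur_complement_psd_symm_part
    (n m : ℕ) (A : Matrix (Fin n) (Fin n) ℝ) (C : Matrix (Fin n) (Fin m) ℝ)
    (hA : IsUnit A.det)
    (hpsd : ∀ x : Fin n → ℝ, 0 ≤ x ⬝ᵥ A.mulVec x) :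
    ∀ x : Fin m → ℝ, 0 ≤ x ⬝ᵥ (Cᵀ * A⁻¹ * C).mulVec x := by
  intro x
  set y := A⁻¹.mulVec (C.mulVec x) with hy
  have hAy : A.mulVec y = C.mulVec x := by
    rw [hy, mulVec_mulVec, Matrix.mul_nonsing_inv A hA, one_mulVec]
  have key : x ⬝ᵥ (Cᵀ * A⁻¹ * C).mulVec x = y ⬝ᵥ A.mulVec y := by
    rw [← mulVec_mulVec, ← mulVec_mulVec, dotProduct_mulVec, vecMul_transpose, hAy,
      dotProduct_comm]
  rw [key]
  exact hpsd y
end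

section
/- The implicit midpoint discretization of E ẋ = J x + B u with E symmetric and J skew-symmetric satisfies the exact discrete energy balance: H(xⁿ⁺¹) - H(xⁿ) = Δt · ⟨B u^{n+1/2}, (xⁿ⁺¹+xⁿ)/2⟩, where H(x) = ½ xᵀ E x. -/
open Matrix

theorem implicit_midpoint_discrete_energy_balance
    (n m : ℕ) (E J : Matrix (Fin n) (Fin n) ℝ)
    (hE : Eᵀ = E) (hJ : Jᵀ = -J)
    (B : Matrix (Fin n) (Fin m) ℝ)
    (Δt : ℝ) (hΔt : 0 < Δt)
    (x₀ x₁ : Fin n → ℝ) (u : Fin m → ℝ)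
    (h : E.mulVec (x₁ - x₀) =
      Δt • (J.mulVec ((1 / 2 : ℝ) • (x₁ + x₀)) + B.mulVec u)) :
    (1 / 2 : ℝ) * (x₁ ⬝ᵥ E.mulVec x₁) - (1 / 2 : ℝ) * (x₀ ⬝ᵥ E.mulVec x₀) =
      Δt * (((1 / 2 : ℝ) • (x₁ + x₀)) ⬝ᵥ B.mulVec u) := by
  set y := (1 / 2 : ℝ) • (x₁ + x₀) with hy
  have hsym : ∀ a b : Fin n → ℝ, a ⬝ᵥ E.mulVec b = b ⬝ᵥ E.mulVec a := by
    intro a b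
    rw [dotProduct_mulVec, ← hE, ← mulVec_transpose, transpose_transpose, hE,
      dotProduct_comm]
  have hskew : y ⬝ᵥ J.mulVec y = 0 := by
    have h1 : y ⬝ᵥ J.mulVec y = - (y ⬝ᵥ J.mulVec y) := by
      conv_lhs => rw [dotProduct_mulVec, ← mulVec_transpose, hJ, neg_mulVec,
        dotProduct_comm, dotProduct_neg]
    linarith
  have key : y ⬝ᵥ E.mulVec (x₁ - x₀) =
      (1 / 2 : ℝ) * (x₁ ⬝ᵥ E.mulVec x₁) - (1 / 2 : ℝ) * (x₀ ⬝ᵥ E.mulVec x₀) := by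
    have hsym01 := hsym x₀ x₁
    simp only [hy, mulVec_sub, smul_dotProduct, add_dotProduct, dotProduct_sub,
      smul_eq_mul]
    linarith
  rw [← key, h, dotProduct_smul, dotProduct_add, hskew, zero_add, smul_eq_mul]
end

section
/- Discrete power balance: suppose finite-dimensional spaces satisfy the subcomplex inclusion d V̄ ⊆ W̄ and d V ⊆ W, and discrete trajectories satisfy the strong conservation laws ∂ₜ ᾱ = (-1)^p d β̄ and ∂ₜ β = -d α. Then (-1)^{p(n-p)} ⟨α, ∂ₜ ᾱ⟩ + ⟨β̄, ∂ₜ β⟩ equals the sum over mesh cells of boundary terms (-1)^p ⟨tr β̄, tr α⟩_{∂T} via integration by parts. -/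
/-- Discrete power balance for the dual-field discretization.  `ι` indexes the
cells `T` of the mesh.  On each cell `i`:
* `Xp1 i` is the space of `(p-1)`-forms (where `bb` lives),
* `Yq1 i` the space of `(q-1)`-forms (where `α` lives, `q - 1 = n - p`),
* `Pp i` the space of `p`-forms (where `abar` lives),
* `Qq i` the space of `q`-forms (where `β` lives);
`dX`, `dY` are the exterior derivatives, `w1 α ω = ∫_T α ∧ ω`,
`w3 ω α = ∫_T ω ∧ α`, `w2 bb η = ∫_T bb ∧ η`, `bd bb α = ∫_{∂T} tr bb ∧ tr α`;
`hcomm` is graded commutativity of the wedge of an `(n-p)`-form with a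
`p`-form, and `hibp` is the integration by parts formula on each cell.
If the strong conservation laws `∂ₜabar = (-1)^p d bb` and `∂ₜβ = -d α` hold on
every cell, then
`(-1)^{p(n-p)} ∫_M α ∧ ∂ₜabar + ∫_M bb ∧ ∂ₜβ = (-1)^p ∑_T ∫_{∂T} tr bb ∧ tr α`. -/
theorem discrete_power_balance
    (n p : ℕ) (hp : 1 ≤ p)
    (ι : Type*) [Fintype ι]
    (Xp1 Yq1 Pp Qq : ι → Type*)
    [∀ i, AddCommGroup (Xp1 i)] [∀ i, Module ℝ (Xp1 i)]
    [∀ i, AddCommGroup (Yq1 i)] [∀ i, Module ℝ (Yq1 i)]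
    [∀ i, AddCommGroup (Pp i)] [∀ i, Module ℝ (Pp i)]
    [∀ i, AddCommGroup (Qq i)] [∀ i, Module ℝ (Qq i)]
    (dX : ∀ i, Xp1 i →ₗ[ℝ] Pp i) (dY : ∀ i, Yq1 i →ₗ[ℝ] Qq i)
    (w1 : ∀ i, Yq1 i →ₗ[ℝ] Pp i →ₗ[ℝ] ℝ)
    (w3 : ∀ i, Pp i →ₗ[ℝ] Yq1 i →ₗ[ℝ] ℝ)
    (w2 : ∀ i, Xp1 i →ₗ[ℝ] Qq i →ₗ[ℝ] ℝ)
    (bd : ∀ i, Xp1 i →ₗ[ℝ] Yq1 i →ₗ[ℝ] ℝ)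
    (hcomm : ∀ i (a : Yq1 i) (ω : Pp i),
      w1 i a ω = ((-1 : ℝ) ^ (p * (n - p))) * w3 i ω a)
    (hibp : ∀ i (ω : Xp1 i) (η : Yq1 i),
      w3 i (dX i ω) η + ((-1 : ℝ) ^ (p - 1)) * w2 i ω (dY i η) = bd i ω η)
    (α : ∀ i, Yq1 i) (bb : ∀ i, Xp1 i) (dta : ∀ i, Pp i) (dtβ : ∀ i, Qq i)
    (hlaw1 : ∀ i, dta i = ((-1 : ℝ) ^ p) • dX i (bb i))
    (hlaw2 : ∀ i, dtβ i = -(dY i (α i))) :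
    ((-1 : ℝ) ^ (p * (n - p))) * (∑ i, w1 i (α i) (dta i)) +
        (∑ i, w2 i (bb i) (dtβ i)) =
      ((-1 : ℝ) ^ p) * ∑ i, bd i (bb i) (α i) := by
  rw [Finset.mul_sum, Finset.mul_sum, ← Finset.sum_add_distrib]
  refine Finset.sum_congr rfl fun i _ => ?_
  rw [hcomm, hlaw1, hlaw2, ← hibp]
  have h1 : ((-1 : ℝ) ^ (p * (n - p))) * ((-1 : ℝ) ^ (p * (n - p))) = 1 := by
    rw [← pow_add, ← two_mul, pow_mul]; norm_num
  have h2 : ((-1 : ℝ) ^ p) * ((-1 : ℝ) ^ (p - 1)) = -1 := by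
    rw [← pow_add]
    have : p + (p - 1) = 2 * (p - 1) + 1 := by omega
    rw [this, pow_succ, pow_mul]; norm_num
  simp only [map_smul, map_neg, LinearMap.smul_apply, LinearMap.neg_apply, smul_eq_mul]
  have h3 : ((-1 : ℝ)) ^ (p * (n - p) * 2) = 1 := by
    rw [mul_two, pow_add]; exact h1
  ring_nf
  rw [h3]
  linear_combination (-(((w2 i) (bb i)) ((dY i) (α i)))) * h2
end

section
/- Equivalence of hybrid and mixed solutions at the algebraic level: let M, J, G, B be matrices with J skew-symmetric. Suppose (x, λ) solves M ẋ = J x + G λ and Gᵀ x = g, while x̃ solves the reduced system obtained by restricting to the constraint set {x : Gᵀ x = g} with test functions in ker Gᵀ, i.e., Pᵀ M ẋ̃ = Pᵀ J x̃ for a matrix P whose columns span ker Gᵀ, with Gᵀ x̃ = g. If M is invertible on ker Gᵀ and G has full column rank, then x = x̃ and λ is uniquely determined. -/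
open Matrix

lemma aux_hasDerivAt_quad {n : ℕ} (M : Matrix (Fin n) (Fin n) ℝ)
    (u : ℝ → Fin n → ℝ) (u' : Fin n → ℝ) (t : ℝ) (h : HasDerivAt u u' t) :
    HasDerivAt (fun s => u s ⬝ᵥ M.mulVec (u s))
      (u' ⬝ᵥ M.mulVec (u t) + u t ⬝ᵥ M.mulVec u') t := by
  have hi : ∀ i, HasDerivAt (fun s => u s i) (u' i) t := fun i => (hasDerivAt_pi.mp h) i
  have key : HasDerivAt (fun s => ∑ i, ∑ j, u s i * (M i j * u s j))
      (∑ i, ∑ j, (u' i * (M i j * u t j) + u t i * (M i j * u' j))) t := by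
    apply HasDerivAt.fun_sum; intro i _; apply HasDerivAt.fun_sum; intro j _
    exact (hi i).mul ((hi j).const_mul (M i j))
  convert key using 1
  · ext s; simp [dotProduct, mulVec, Finset.mul_sum]
  · simp [dotProduct, mulVec, Finset.mul_sum, Finset.sum_add_distrib]

lemma aux_mulVec_dot {n r : ℕ} (P : Matrix (Fin n) (Fin r) ℝ)
    (w : Fin r → ℝ) (v : Fin n → ℝ) :
    P.mulVec w ⬝ᵥ v = w ⬝ᵥ Pᵀ.mulVec v := by
  rw [dotProduct_comm, dotProduct_mulVec, ← Matrix.mulVec_transpose, dotProduct_comm]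

/-- Equivalence of hybrid and mixed solutions at the algebraic level.
`M` is symmetric positive definite, `J` skew-symmetric, `G` has full column
rank, and the columns of `P` span `ker Gᵀ`.  `x` solves the constrained system
`M ẋ = J x + G λ`, `Gᵀ x = g`, while `x̃` solves the reduced system
`Pᵀ M ẋ̃ = Pᵀ J x̃`, `Gᵀ x̃ = g`, with the same initial condition.  Then
`x = x̃` and the multiplier `λ` is uniquely determined by
`M ẋ - J x = G λ`. -/
theorem hybrid_mixed_equivalence
    (n m r : ℕ)
    (M J : Matrix (Fin n) (Fin n) ℝ)
    (hM : Mᵀ = M) (hMpos : ∀ v : Fin n → ℝ, v ≠ 0 → 0 < v ⬝ᵥ M.mulVec v)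
    (hJ : Jᵀ = -J)
    (G : Matrix (Fin n) (Fin m) ℝ)
    (hG : ∀ w : Fin m → ℝ, G.mulVec w = 0 → w = 0)
    (P : Matrix (Fin n) (Fin r) ℝ)
    (hP : ∀ v : Fin n → ℝ, Gᵀ.mulVec v = 0 ↔ ∃ w : Fin r → ℝ, P.mulVec w = v)
    (g : Fin m → ℝ)
    (x xt : ℝ → Fin n → ℝ) (lam : ℝ → Fin m → ℝ)
    (hx : Differentiable ℝ x) (hxt : Differentiable ℝ xt)
    (heq1 : ∀ t, M.mulVec (deriv x t) = J.mulVec (x t) + G.mulVec (lam t))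
    (heq2 : ∀ t, Gᵀ.mulVec (x t) = g)
    (heq3 : ∀ t, (Pᵀ * M).mulVec (deriv xt t) = (Pᵀ * J).mulVec (xt t))
    (heq4 : ∀ t, Gᵀ.mulVec (xt t) = g)
    (hinit : x 0 = xt 0) :
    (∀ t, x t = xt t) ∧
      ∀ (t : ℝ) (μ : Fin m → ℝ),
        M.mulVec (deriv x t) - J.mulVec (x t) = G.mulVec μ → μ = lam t := by
  set e : ℝ → Fin n → ℝ := fun t => x t - xt t with he_def
  set e' : ℝ → Fin n → ℝ := fun t => deriv x t - deriv xt t with he'_def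
  have hde : ∀ t, HasDerivAt e (e' t) t := fun t =>
    ((hx t).hasDerivAt).sub ((hxt t).hasDerivAt)
  -- e(t) ∈ ker Gᵀ
  have hGe : ∀ t, Gᵀ.mulVec (e t) = 0 := by
    intro t
    simp only [he_def, Matrix.mulVec_sub, heq2, heq4, sub_self]
  -- Pᵀ G v = 0
  have hPG : ∀ v : Fin m → ℝ, Pᵀ.mulVec (G.mulVec v) = 0 := by
    intro v
    funext i
    have hc : Gᵀ.mulVec (P.mulVec (Pi.single i 1)) = 0 :=
      (hP _).mpr ⟨Pi.single i 1, rfl⟩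
    have : Pᵀ.mulVec (G.mulVec v) i = P.mulVec (Pi.single i 1) ⬝ᵥ G.mulVec v := by
      simp [mulVec, dotProduct, Pi.single_apply, mul_ite, Finset.sum_ite_eq',
        mul_comm]
    rw [this, dotProduct_mulVec, ← Matrix.mulVec_transpose, hc]
    simp
  -- Pᵀ M e' = Pᵀ J e
  have hPMe : ∀ t, Pᵀ.mulVec (M.mulVec (e' t)) = Pᵀ.mulVec (J.mulVec (e t)) := by
    intro t
    have hA : Pᵀ.mulVec (M.mulVec (deriv x t)) = Pᵀ.mulVec (J.mulVec (x t)) := by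
      rw [heq1 t, Matrix.mulVec_add, hPG (lam t), add_zero]
    have hB : Pᵀ.mulVec (M.mulVec (deriv xt t)) = Pᵀ.mulVec (J.mulVec (xt t)) := by
      have h3 := heq3 t
      rwa [← Matrix.mulVec_mulVec, ← Matrix.mulVec_mulVec] at h3
    show Pᵀ.mulVec (M.mulVec (deriv x t - deriv xt t))
        = Pᵀ.mulVec (J.mulVec (x t - xt t))
    rw [Matrix.mulVec_sub M, Matrix.mulVec_sub J, Matrix.mulVec_sub Pᵀ,
      Matrix.mulVec_sub Pᵀ, hA, hB]
  -- e ⬝ᵥ J e = 0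
  have hskew : ∀ v : Fin n → ℝ, v ⬝ᵥ J.mulVec v = 0 := by
    intro v
    have h1 : v ⬝ᵥ J.mulVec v = Jᵀ.mulVec v ⬝ᵥ v := by
      rw [dotProduct_mulVec, ← Matrix.mulVec_transpose]
    rw [hJ, Matrix.neg_mulVec, neg_dotProduct, dotProduct_comm] at h1
    rw [dotProduct_comm]
    linarith
  -- e ⬝ᵥ M e' = 0
  have hdot : ∀ t, e t ⬝ᵥ M.mulVec (e' t) = 0 := by
    intro t
    obtain ⟨w, hw⟩ := (hP (e t)).mp (hGe t)
    calc e t ⬝ᵥ M.mulVec (e' t) = P.mulVec w ⬝ᵥ M.mulVec (e' t) := by rw [hw]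
      _ = w ⬝ᵥ Pᵀ.mulVec (M.mulVec (e' t)) := aux_mulVec_dot P w _
      _ = w ⬝ᵥ Pᵀ.mulVec (J.mulVec (e t)) := by rw [hPMe t]
      _ = P.mulVec w ⬝ᵥ J.mulVec (e t) := (aux_mulVec_dot P w _).symm
      _ = e t ⬝ᵥ J.mulVec (e t) := by rw [hw]
      _ = 0 := hskew _
  -- energy function
  set f : ℝ → ℝ := fun t => e t ⬝ᵥ M.mulVec (e t) with hf_def
  have hdf : ∀ t, HasDerivAt f 0 t := by
    intro t
    have h := aux_hasDerivAt_quad M e (e' t) t (hde t)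
    have hsym : e' t ⬝ᵥ M.mulVec (e t) = e t ⬝ᵥ M.mulVec (e' t) := by
      rw [dotProduct_mulVec, ← Matrix.mulVec_transpose, hM, dotProduct_comm]
    rw [show (0 : ℝ) = e' t ⬝ᵥ M.mulVec (e t) + e t ⬝ᵥ M.mulVec (e' t) by
      rw [hsym, hdot t]; ring]
    exact h
  have hfconst : ∀ t, f t = f 0 := by
    intro t
    exact is_const_of_deriv_eq_zero (fun s => (hdf s).differentiableAt)
      (fun s => (hdf s).deriv) t 0
  have hf0 : f 0 = 0 := by
    simp only [hf_def, he_def, hinit, sub_self]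
    simp
  have hxeq : ∀ t, x t = xt t := by
    intro t
    have hft : f t = 0 := by rw [hfconst t, hf0]
    by_contra hne
    have hene : e t ≠ 0 := by
      simp only [he_def, sub_ne_zero]
      exact hne
    exact absurd hft (ne_of_gt (hMpos (e t) hene))
  refine ⟨hxeq, ?_⟩
  intro t μ hμ
  have h1 : M.mulVec (deriv x t) - J.mulVec (x t) = G.mulVec (lam t) := by
    rw [heq1 t]; abel
  have h2 : G.mulVec (μ - lam t) = 0 := by
    rw [Matrix.mulVec_sub, ← hμ, h1, sub_self]
  have := hG _ h2
  rwa [sub_eq_zero] at this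
end
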